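/- Let α > 1, u ≥ 0, and i ≥ 1 an integer. Then ∫_0^∞ (z+u+1)^{-(α+2)} (1 − (z+u+1)^{-α})^{i−1} dz ≤ e / (α · i^{1+1/α}). -/

import Mathlib

open MeasureTheory Set Real


/-- first bound on the stability integral `I_{i,α+2}`:
`∫_0^∞ (z+u+1)^{-(α+2)} (1−(z+u+1)^{-α})^{i−1} dz ≤ e/(α i^{1+1/α})`. -/
theorem ftpl_pareto_stability_integral_first_bound
    (α : ℝ) (hα : 1 < α) (u : ℝ) (hu : 0 ≤ u) (i : ℕ) (hi : 1 ≤ i) :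
    (∫ z in Set.Ioi (0 : ℝ),
        (z + u + 1) ^ (-(α + 2)) * (1 - (z + u + 1) ^ (-α)) ^ (i - 1))
      ≤ Real.exp 1 / (α * (i : ℝ) ^ (1 + 1 / α)) := by
  have hα0 : (0:ℝ) < α := by linarith
  have hb : (0:ℝ) < (i:ℝ) := by exact_mod_cast Nat.pos_of_ne_zero (by omega)
  have hb1 : (1:ℝ) ≤ (i:ℝ) := by exact_mod_cast hi
  set b : ℝ := (i:ℝ) with hbdef
  set g₀ : ℝ → ℝ := fun w => w ^ (-(α+2)) * Real.exp (-b * w ^ (-α)) with hg₀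
  have hq : (-1:ℝ) < 1/α := by
    have : (0:ℝ) < 1/α := by positivity
    linarith
  -- integrability of the Gamma-type integrand
  have hF0_int : IntegrableOn (fun y : ℝ => y ^ (1/α) * Real.exp (-b * y)) (Ioi 0) := by
    have h := integrableOn_rpow_mul_exp_neg_mul_rpow (p := 1) (s := 1/α) (b := b) hq one_pos hb
    simpa [Real.rpow_one] using h
  have hF_int : IntegrableOn (fun y : ℝ => (1/α) * (y ^ (1/α) * Real.exp (-b * y))) (Ioi 0) :=
    hF0_int.const_mul _
  -- the substitution identity (pointwise form)
  have hcongr : ∀ x ∈ Ioi (0:ℝ),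
      (|(-α)| * x ^ ((-α) - 1)) •
        (fun y : ℝ => (1/α) * (y ^ (1/α) * Real.exp (-b * y))) (x ^ (-α)) = g₀ x := by
    intro x hx
    have hx0 : (0:ℝ) < x := hx
    have habs : |(-α)| = α := by rw [abs_neg, abs_of_pos hα0]
    have h1 : (x ^ (-α)) ^ (1/α) = x ^ (-(1:ℝ)) := by
      rw [← Real.rpow_mul hx0.le]
      congr 1
      field_simp
    simp only [smul_eq_mul, habs, h1, hg₀]
    have h2 : x ^ ((-α) - 1) * x ^ (-(1:ℝ)) = x ^ (-(α+2)) := by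
      rw [← Real.rpow_add hx0]
      congr 1
      ring
    calc α * x ^ ((-α)-1) * ((1/α) * (x ^ (-(1:ℝ)) * Real.exp (-b * x ^ (-α))))
        = (α * (1/α)) * ((x ^ ((-α)-1) * x ^ (-(1:ℝ))) * Real.exp (-b * x ^ (-α))) := by ring
      _ = x ^ (-(α+2)) * Real.exp (-b * x ^ (-α)) := by
          rw [h2, mul_one_div_cancel hα0.ne', one_mul]
  have hne : (-α) ≠ 0 := by linarith
  -- integrability of g₀ on Ioi 0
  have hg₀_int : IntegrableOn g₀ (Ioi 0) := by
    have h := (integrableOn_Ioi_comp_rpow_iff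
      (fun y : ℝ => (1/α) * (y ^ (1/α) * Real.exp (-b * y))) hne).mpr hF_int
    exact h.congr_fun hcongr measurableSet_Ioi
  -- value of the integral of g₀
  have hint_eq : ∫ x in Ioi (0:ℝ), g₀ x
      = ∫ y in Ioi (0:ℝ), (1/α) * (y ^ (1/α) * Real.exp (-b * y)) := by
    rw [← integral_comp_rpow_Ioi (fun y : ℝ => (1/α) * (y ^ (1/α) * Real.exp (-b * y))) hne]
    exact setIntegral_congr_fun measurableSet_Ioi (fun x hx => (hcongr x hx).symm)
  have hval : ∫ y in Ioi (0:ℝ), y ^ (1/α) * Real.exp (-b * y)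
      = b ^ (-(1/α + 1)) * Real.Gamma (1/α + 1) := by
    have h := integral_rpow_mul_exp_neg_mul_rpow (p := 1) (q := 1/α) one_pos hq hb
    simpa [Real.rpow_one] using h
  -- Gamma (1/α + 1) ≤ 1 by convexity
  have hs1 : 1/α < 1 := by rw [div_lt_one hα0]; exact hα
  have hGamma : Real.Gamma (1/α + 1) ≤ 1 := by
    have h := Real.convexOn_Gamma.2 (mem_Ioi.mpr one_pos) (mem_Ioi.mpr two_pos)
      (by linarith : (0:ℝ) ≤ 1 - 1/α) (by positivity : (0:ℝ) ≤ 1/α) (by ring)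
    have he : (1 - 1/α) • (1:ℝ) + (1/α) • (2:ℝ) = 1/α + 1 := by
      simp only [smul_eq_mul]; ring
    rw [he, Real.Gamma_one, Real.Gamma_two] at h
    simpa using h
  -- translation
  have hshift : ∫ z in Ioi (0:ℝ), g₀ (z + (u+1)) = ∫ w in Ioi (u+1), g₀ w := by
    have h := (measurePreserving_add_right volume (u+1)).setIntegral_preimage_emb
      (measurableEmbedding_addRight (u+1)) g₀ (Ioi (u+1))
    rwa [preimage_add_const_Ioi, sub_self] at h
  have hshift_int : IntegrableOn (fun z => g₀ (z + (u+1))) (Ioi 0) := by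
    have h1 : IntegrableOn g₀ (Ioi (u+1)) :=
      hg₀_int.mono_set (Ioi_subset_Ioi (by linarith))
    have h2 := ((measurePreserving_add_right volume (u+1)).integrableOn_comp_preimage
      (measurableEmbedding_addRight (u+1))).mpr h1
    rwa [preimage_add_const_Ioi, sub_self] at h2
  -- pointwise bound
  have hpt : ∀ z ∈ Ioi (0:ℝ),
      (z + u + 1) ^ (-(α + 2)) * (1 - (z + u + 1) ^ (-α)) ^ (i - 1)
        ≤ Real.exp 1 * g₀ (z + (u+1)) := by
    intro z hz
    have hz0 : (0:ℝ) < z := hz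
    have hw1 : 1 < z + u + 1 := by linarith
    have hw0 : (0:ℝ) < z + u + 1 := by linarith
    have hteq : z + (u+1) = z + u + 1 := by ring
    rw [hteq, hg₀]
    set t := (z + u + 1) ^ (-α) with ht
    have ht0 : 0 < t := Real.rpow_pos_of_pos hw0 _
    have ht1 : t < 1 := Real.rpow_lt_one_of_one_lt_of_neg hw1 (by linarith)
    have h1 : (1 - t) ^ (i-1) ≤ Real.exp 1 * Real.exp (-b * t) := by
      have h2 : 1 - t ≤ Real.exp (-t) := by
        have := Real.add_one_le_exp (-t); linarith
      have h3 : (1-t)^(i-1) ≤ (Real.exp (-t))^(i-1) :=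
        pow_le_pow_left₀ (by linarith) h2 _
      have hcast : ((i-1 : ℕ) : ℝ) = b - 1 := by
        rw [Nat.cast_sub hi]; simp [hbdef]
      have h4 : (Real.exp (-t))^(i-1) = Real.exp ((b - 1) * (-t)) := by
        rw [← Real.exp_nat_mul, hcast]
      have h5 : (b - 1) * (-t) ≤ 1 + (-b * t) := by nlinarith
      calc (1-t)^(i-1) ≤ Real.exp ((b-1) * (-t)) := h4 ▸ h3
        _ ≤ Real.exp (1 + (-b * t)) := Real.exp_le_exp.mpr h5
        _ = Real.exp 1 * Real.exp (-b * t) := Real.exp_add _ _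
    have hwpos : (0:ℝ) ≤ (z+u+1) ^ (-(α+2)) := (Real.rpow_pos_of_pos hw0 _).le
    calc (z+u+1)^(-(α+2)) * (1-t)^(i-1)
        ≤ (z+u+1)^(-(α+2)) * (Real.exp 1 * Real.exp (-b*t)) :=
          mul_le_mul_of_nonneg_left h1 hwpos
      _ = Real.exp 1 * ((z+u+1)^(-(α+2)) * Real.exp (-b*t)) := by ring
  have hf_nonneg : ∀ z ∈ Ioi (0:ℝ),
      0 ≤ (z+u+1)^(-(α+2)) * (1-(z+u+1)^(-α))^(i-1) := by
    intro z hz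
    have hz0 : (0:ℝ) < z := hz
    have hw1 : 1 < z + u + 1 := by linarith
    have ht1 : (z+u+1)^(-α) ≤ 1 :=
      (Real.rpow_lt_one_of_one_lt_of_neg hw1 (by linarith)).le
    exact mul_nonneg (Real.rpow_pos_of_pos (by linarith) _).le
      (pow_nonneg (by linarith) _)
  -- final numeric bound
  have key2 : (1/α) * (b ^ (-(1/α+1)) * Real.Gamma (1/α+1)) ≤ 1 / (α * b ^ (1+1/α)) := by
    rw [show -(1/α+1) = -(1+1/α) by ring, Real.rpow_neg hb.le,
      one_div (α * b ^ (1+1/α)), mul_inv]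
    have h1 : (0:ℝ) ≤ (b ^ (1+1/α))⁻¹ := by positivity
    calc (1/α) * ((b^(1+1/α))⁻¹ * Real.Gamma (1/α+1))
        ≤ (1/α) * ((b^(1+1/α))⁻¹ * 1) := by
          apply mul_le_mul_of_nonneg_left (mul_le_mul_of_nonneg_left hGamma h1) (by positivity)
      _ = α⁻¹ * (b^(1+1/α))⁻¹ := by rw [mul_one, one_div]
  calc (∫ z in Ioi (0:ℝ), (z+u+1)^(-(α+2)) * (1-(z+u+1)^(-α))^(i-1))
      ≤ ∫ z in Ioi (0:ℝ), Real.exp 1 * g₀ (z + (u+1)) := by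
        refine integral_mono_of_nonneg ?_ (hshift_int.const_mul _) ?_
        · exact (ae_restrict_iff' measurableSet_Ioi).mpr (ae_of_all _ hf_nonneg)
        · exact (ae_restrict_iff' measurableSet_Ioi).mpr (ae_of_all _ hpt)
    _ = Real.exp 1 * ∫ z in Ioi (0:ℝ), g₀ (z + (u+1)) := integral_const_mul _ _
    _ = Real.exp 1 * ∫ w in Ioi (u+1), g₀ w := by rw [hshift]
    _ ≤ Real.exp 1 * ∫ w in Ioi (0:ℝ), g₀ w := by
        refine mul_le_mul_of_nonneg_left ?_ (Real.exp_pos 1).le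
        refine setIntegral_mono_set hg₀_int ?_
          (HasSubset.Subset.eventuallyLE (Ioi_subset_Ioi (by linarith)))
        refine (ae_restrict_iff' measurableSet_Ioi).mpr (ae_of_all _ fun w hw => ?_)
        exact mul_nonneg (Real.rpow_pos_of_pos hw _).le (Real.exp_pos _).le
    _ = Real.exp 1 * ((1/α) * (b ^ (-(1/α+1)) * Real.Gamma (1/α+1))) := by
        rw [hint_eq, MeasureTheory.integral_const_mul, hval]
    _ ≤ Real.exp 1 * (1 / (α * b ^ (1+1/α))) :=
        mul_le_mul_of_nonneg_left key2 (Real.exp_pos 1).le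
    _ = Real.exp 1 / (α * b ^ (1+1/α)) := by rw [mul_one_div]
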